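/- Let Γ be a finite abelian group and let S and T be disjoint symmetric subsets of Γ. If H_S(t) and H_T(t) are the transition matrices of Cay(Γ, S) and Cay(Γ, T), respectively, then for every t ∈ ℝ the transition matrix of Cay(Γ, S ∪ T) equals H_S(t)·H_T(t). -/

import Mathlib

open Matrix Complex

/-- Adjacency matrix of the Cayley graph `Cay(Γ, S)`: `a, b` adjacent iff `a - b ∈ S`. -/
noncomputable def cayAdj {G : Type*} [AddGroup G] (S : Set G) : Matrix G G ℂ :=
  Matrix.of fun a b => S.indicator (fun _ => (1 : ℂ)) (a - b)

/-- Transition matrix `H(t) = exp(i t A)` of a graph with adjacency matrix `A`. -/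
noncomputable def transitionM {V : Type*} [Fintype V] [DecidableEq V]
    (A : Matrix V V ℂ) (t : ℝ) : Matrix V V ℂ :=
  NormedSpace.exp ((Complex.I * (t : ℂ)) • A)

lemma cayAdj_commute {Γ : Type*} [AddCommGroup Γ] [Fintype Γ] [DecidableEq Γ]
    (S T : Set Γ) : Commute (cayAdj S) (cayAdj T) := by
  ext a b
  simp only [Matrix.mul_apply, cayAdj, Matrix.of_apply]
  exact Finset.sum_nbij' (fun c => a + b - c) (fun c => a + b - c)
    (fun _ _ => Finset.mem_univ _) (fun _ _ => Finset.mem_univ _)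
    (fun c _ => sub_sub_cancel _ _) (fun c _ => sub_sub_cancel _ _)
    (fun c _ => by
      rw [show a - (a + b - c) = c - b by abel, show a + b - c - b = a - c by abel]
      ring)

lemma cayAdj_union {Γ : Type*} [AddCommGroup Γ] [Fintype Γ] [DecidableEq Γ]
    (S T : Set Γ) (hST : Disjoint S T) : cayAdj (S ∪ T) = cayAdj S + cayAdj T := by
  ext a b
  simp only [cayAdj, Matrix.of_apply, Matrix.add_apply]
  by_cases hs : a - b ∈ S
  · have ht : a - b ∉ T := fun h => hST.ne_of_mem hs h rfl
    rw [Set.indicator_of_mem (Set.mem_union_left _ hs), Set.indicator_of_mem hs,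
      Set.indicator_of_notMem ht, add_zero]
  · by_cases ht : a - b ∈ T
    · rw [Set.indicator_of_mem (Set.mem_union_right _ ht), Set.indicator_of_mem ht,
        Set.indicator_of_notMem hs, zero_add]
    · rw [Set.indicator_of_notMem (fun h => h.elim hs ht), Set.indicator_of_notMem hs,
        Set.indicator_of_notMem ht, add_zero]

/-- Let `Γ` be a finite abelian group and `S`, `T` disjoint symmetric subsets
of `Γ`.  Then for every `t ∈ ℝ`, the transition matrix of `Cay(Γ, S ∪ T)` equals
`H_S(t) * H_T(t)`. -/
theorem transition_union {Γ : Type*} [AddCommGroup Γ] [Fintype Γ] [DecidableEq Γ]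
    (S T : Set Γ) (hST : Disjoint S T)
    (hS : ∀ s ∈ S, -s ∈ S) (hT : ∀ s ∈ T, -s ∈ T) (t : ℝ) :
    transitionM (cayAdj (S ∪ T)) t = transitionM (cayAdj S) t * transitionM (cayAdj T) t := by
  unfold transitionM
  rw [cayAdj_union S T hST, smul_add]
  exact Matrix.exp_add_of_commute _ _ ((cayAdj_commute S T).smul_left _ |>.smul_right _)
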